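/- Let ζ be a real random variable satisfying the assumption of at most exponential oscillations in the tails with constants R_+, R_− ∈ ℝ and C ≥ 0. Then P(ζ = x) = 0 for every x ∈ (−∞, R_−) ∪ (R_+, ∞). -/

import Mathlib

open MeasureTheory Filter Topology

noncomputable section

/-- If a real random variable `ζ` has at most exponential oscillations in the tails, with
constants `R₊, R₋ ∈ ℝ` and `C ≥ 0`, then `P(ζ = x) = 0` for every
`x ∈ (-∞, R₋) ∪ (R₊, ∞)`. -/
theorem stmt12 {Ω : Type*} [MeasurableSpace Ω] (P : Measure Ω) [IsProbabilityMeasure P]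
    (ζ : Ω → ℝ) (hζ : Measurable ζ) (C Rp Rm : ℝ) (hC : 0 ≤ C)
    (hplus : ∀ a ≥ Rp, ∀ u > (0 : ℝ),
      P (ζ ⁻¹' Set.Ioc (a + u) (a + 2 * u)) ≤
        ENNReal.ofReal C * P (ζ ⁻¹' Set.Ioc a (a + u)))
    (hminus : ∀ a ≤ Rm, ∀ u < (0 : ℝ),
      P (ζ ⁻¹' Set.Ioc (a + 2 * u) (a + u)) ≤
        ENNReal.ofReal C * P (ζ ⁻¹' Set.Ioc (a + u) a)) :
    ∀ x : ℝ, x < Rm ∨ Rp < x → P (ζ ⁻¹' {x}) = 0 := by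
  intro x hx
  rcases hx with hx | hx
  · -- case x < Rm
    set d : ℝ := (Rm - x) / 2 with hd
    have hd0 : 0 < d := by simp only [hd]; linarith
    set u : ℕ → ℝ := fun n => d / (n + 1) with hu
    have hu0 : ∀ n, 0 < u n := fun n => by
      have : (0 : ℝ) < n + 1 := by positivity
      exact div_pos hd0 this
    have hud : ∀ n, u n ≤ d := fun n => by
      have h1 : (1 : ℝ) ≤ n + 1 := by
        have : (0 : ℝ) ≤ n := Nat.cast_nonneg n
        linarith
      calc u n = d / (n + 1) := rfl
        _ ≤ d / 1 := by
            apply div_le_div_of_nonneg_left hd0.le (by norm_num) h1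
        _ = d := by ring
    set s : ℕ → Set Ω := fun n => ζ ⁻¹' Set.Ioc x (x + u n) with hs
    have hanti : Antitone s := by
      intro m n hmn
      apply Set.preimage_mono
      apply Set.Ioc_subset_Ioc le_rfl
      have : u n ≤ u m := by
        apply div_le_div_of_nonneg_left hd0.le (by positivity)
        have : (m : ℝ) ≤ n := Nat.cast_le.mpr hmn
        linarith
      linarith
    have hinter : ⋂ n, s n = ∅ := by
      ext ω
      simp only [Set.mem_iInter, Set.mem_empty_iff_false, iff_false, not_forall, hs,
        Set.mem_preimage, Set.mem_Ioc, not_and, not_le]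
      by_cases hgt : x < ζ ω
      · obtain ⟨n, hn⟩ := exists_nat_gt (d / (ζ ω - x))
        refine ⟨n, fun _ => ?_⟩
        have hpos : 0 < ζ ω - x := by linarith
        have h2 : d < ((n:ℝ) + 1) * (ζ ω - x) := by
          rw [div_lt_iff₀ hpos] at hn
          nlinarith [Nat.cast_nonneg (α := ℝ) n]
        have hn1 : (0:ℝ) < (n:ℝ) + 1 := by positivity
        have : u n < ζ ω - x := by
          show d / ((n:ℝ) + 1) < ζ ω - x
          rw [div_lt_iff₀ hn1]
          nlinarith
        linarith
      · exact ⟨0, fun h => absurd h hgt⟩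
    have htend : Tendsto (fun n => P (s n)) atTop (𝓝 0) := by
      have h := tendsto_measure_iInter_atTop (μ := P) (s := s)
        (fun n => (hζ measurableSet_Ioc).nullMeasurableSet) hanti
        ⟨0, measure_ne_top P _⟩
      rw [hinter, measure_empty] at h
      exact h
    have hbound : ∀ n, P (ζ ⁻¹' {x}) ≤ ENNReal.ofReal C * P (s n) := by
      intro n
      have ha : x + u n ≤ Rm := by
        have := hud n
        have : u n ≤ Rm - x := by
          have : d ≤ Rm - x := by rw [hd]; linarith
          linarith [hud n]
        linarith
      have h := hminus (x + u n) ha (-(u n)) (by linarith [hu0 n])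
      have e1 : x + u n + 2 * -(u n) = x - u n := by ring
      have e2 : x + u n + -(u n) = x := by ring
      rw [e1, e2] at h
      calc P (ζ ⁻¹' {x}) ≤ P (ζ ⁻¹' Set.Ioc (x - u n) x) := by
            apply measure_mono
            apply Set.preimage_mono
            intro y hy
            simp only [Set.mem_singleton_iff] at hy
            subst hy
            exact ⟨by linarith [hu0 n], le_rfl⟩
        _ ≤ ENNReal.ofReal C * P (ζ ⁻¹' Set.Ioc x (x + u n)) := h
        _ = ENNReal.ofReal C * P (s n) := rfl
    have htend2 : Tendsto (fun n => ENNReal.ofReal C * P (s n)) atTop (𝓝 0) := by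
      have h2 : Tendsto (fun n => ENNReal.ofReal C * P (s n)) atTop
          (𝓝 (ENNReal.ofReal C * 0)) :=
        ENNReal.Tendsto.const_mul htend (Or.inr ENNReal.ofReal_ne_top)
      simpa using h2
    exact le_antisymm (ge_of_tendsto' htend2 hbound |>.trans le_rfl) zero_le
  · -- case Rp < x
    set d : ℝ := (x - Rp) / 2 with hd
    have hd0 : 0 < d := by simp only [hd]; linarith
    set u : ℕ → ℝ := fun n => d / (n + 1) with hu
    have hu0 : ∀ n, 0 < u n := fun n => by
      have : (0 : ℝ) < n + 1 := by positivity
      exact div_pos hd0 this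
    have hud : ∀ n, u n ≤ d := fun n => by
      have h1 : (1 : ℝ) ≤ n + 1 := by
        have : (0 : ℝ) ≤ n := Nat.cast_nonneg n
        linarith
      calc u n = d / (n + 1) := rfl
        _ ≤ d / 1 := by
            apply div_le_div_of_nonneg_left hd0.le (by norm_num) h1
        _ = d := by ring
    set s : ℕ → Set Ω := fun n => ζ ⁻¹' Set.Ioo (x - 2 * u n) x with hs
    have hanti : Antitone s := by
      intro m n hmn
      apply Set.preimage_mono
      apply Set.Ioo_subset_Ioo _ le_rfl
      have : u n ≤ u m := by
        apply div_le_div_of_nonneg_left hd0.le (by positivity)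
        have : (m : ℝ) ≤ n := Nat.cast_le.mpr hmn
        linarith
      linarith
    have hinter : ⋂ n, s n = ∅ := by
      ext ω
      simp only [Set.mem_iInter, Set.mem_empty_iff_false, iff_false, not_forall, hs,
        Set.mem_preimage, Set.mem_Ioo, not_and, not_lt]
      by_cases hgt : ζ ω < x
      · obtain ⟨n, hn⟩ := exists_nat_gt (2 * d / (x - ζ ω))
        refine ⟨n, fun h => ?_⟩
        exfalso
        have hpos : 0 < x - ζ ω := by linarith
        have hn1 : (0:ℝ) < (n:ℝ) + 1 := by positivity
        have h2 : 2 * d < ((n:ℝ) + 1) * (x - ζ ω) := by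
          rw [div_lt_iff₀ hpos] at hn
          nlinarith [Nat.cast_nonneg (α := ℝ) n]
        have h3 : 2 * u n < x - ζ ω := by
          have he : u n = d / ((n:ℝ) + 1) := rfl
          rw [he, ← mul_div_assoc, div_lt_iff₀ hn1]
          nlinarith
        linarith
      · refine ⟨0, fun _ => le_of_not_gt hgt⟩
    have htend : Tendsto (fun n => P (s n)) atTop (𝓝 0) := by
      have h := tendsto_measure_iInter_atTop (μ := P) (s := s)
        (fun n => (hζ measurableSet_Ioo).nullMeasurableSet) hanti
        ⟨0, measure_ne_top P _⟩
      rw [hinter, measure_empty] at h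
      exact h
    have hbound : ∀ n, P (ζ ⁻¹' {x}) ≤ ENNReal.ofReal C * P (s n) := by
      intro n
      have ha : x - 2 * u n ≥ Rp := by
        have h1 : u n ≤ d := hud n
        have h2 : 2 * d = x - Rp := by rw [hd]; ring
        linarith
      have h := hplus (x - 2 * u n) ha (u n) (hu0 n)
      have e1 : x - 2 * u n + u n = x - u n := by ring
      have e2 : x - 2 * u n + 2 * u n = x := by ring
      rw [e1, e2] at h
      calc P (ζ ⁻¹' {x}) ≤ P (ζ ⁻¹' Set.Ioc (x - u n) x) := by
            apply measure_mono
            apply Set.preimage_mono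
            intro y hy
            simp only [Set.mem_singleton_iff] at hy
            subst hy
            exact ⟨by linarith [hu0 n], le_rfl⟩
        _ ≤ ENNReal.ofReal C * P (ζ ⁻¹' Set.Ioc (x - 2 * u n) (x - u n)) := h
        _ ≤ ENNReal.ofReal C * P (s n) := by
            apply mul_le_mul_right
            apply measure_mono
            apply Set.preimage_mono
            intro y hy
            exact ⟨hy.1, by linarith [hy.2, hu0 n]⟩
    have htend2 : Tendsto (fun n => ENNReal.ofReal C * P (s n)) atTop (𝓝 0) := by
      have h2 : Tendsto (fun n => ENNReal.ofReal C * P (s n)) atTop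
          (𝓝 (ENNReal.ofReal C * 0)) :=
        ENNReal.Tendsto.const_mul htend (Or.inr ENNReal.ofReal_ne_top)
      simpa using h2
    exact le_antisymm (ge_of_tendsto' htend2 hbound |>.trans le_rfl) zero_le
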